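/- (Correctness of reduction rule R2) Let G=(V,E) be a graph on n vertices, π a 2-partition of V, and K,t,f nonnegative integers. If v∈V satisfies c_π(v) < n−t−f, then v cannot belong to any (K,t)-feasible flipping set F for π with |F| ≤ f. Equivalently: if |F| ≤ f and v∈F, then c_{π⊖F}(v) > t. -/

import Mathlib

open Finset

variable {V : Type*} [Fintype V] [DecidableEq V]

/-- A 2-partition of the vertex set is given by an indicator `π : V → Bool`
(the two clusters are the preimages of `true` and `false`).
Two vertices `u ≠ v` are in conflict if they are in the same cluster but not adjacent,
or in different clusters but adjacent. -/
def Conflict (G : SimpleGraph V) (π : V → Bool) (u v : V) : Prop :=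
  u ≠ v ∧ ((π u = π v) ↔ ¬ G.Adj u v)

instance (G : SimpleGraph V) [DecidableRel G.Adj] (π : V → Bool) (u v : V) :
    Decidable (Conflict G π u v) := by
  unfold Conflict; infer_instance

/-- `C_π(v)` : the set of vertices in conflict with `v`. -/
def conflictSet (G : SimpleGraph V) [DecidableRel G.Adj] (π : V → Bool) (v : V) : Finset V :=
  Finset.univ.filter (fun u => Conflict G π v u)

/-- `c_π(v)` : the conflict number of `v`. -/
def cNum (G : SimpleGraph V) [DecidableRel G.Adj] (π : V → Bool) (v : V) : ℕ :=
  (conflictSet G π v).card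

/-- Flipping the set `F` : moving every vertex of `F` to the other cluster. -/
def flipSet (π : V → Bool) (F : Finset V) : V → Bool :=
  fun v => if v ∈ F then !(π v) else π v

/-- `h₁(π)` : the total conflict number. -/
def h1 (G : SimpleGraph V) [DecidableRel G.Adj] (π : V → Bool) : ℕ :=
  ∑ v, cNum G π v

/-- `h₂(π)` : the sum of squared conflict numbers. -/
def h2 (G : SimpleGraph V) [DecidableRel G.Adj] (π : V → Bool) : ℕ :=
  ∑ v, (cNum G π v) ^ 2

/-- correctness of rule R2: if `c_π(v) < n − t − f`, then `v` cannot be in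
any `(K,t)`-feasible flipping set of size at most `f`; equivalently,
if `|F| ≤ f` and `v ∈ F`, then `c_{π⊖F}(v) > t` (so `F` is not `(K,t)`-feasible). -/
theorem rule_R2 (G : SimpleGraph V) [DecidableRel G.Adj] (π : V → Bool) (t f : ℕ)
    (v : V) (hv : (cNum G π v : ℤ) < (Fintype.card V : ℤ) - t - f)
    (F : Finset V) (hF : F.card ≤ f) (hvF : v ∈ F) :
    cNum G (flipSet π F) v > t := by
  classical
  have hsub : (univ \ (F ∪ conflictSet G π v)) ⊆ conflictSet G (flipSet π F) v := by
    intro u hu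
    simp only [mem_sdiff, mem_union, mem_univ, true_and, not_or] at hu
    obtain ⟨huF, huc⟩ := hu
    have hne : v ≠ u := fun h => huF (h ▸ hvF)
    simp only [conflictSet, mem_filter, mem_univ, true_and] at huc ⊢
    simp only [Conflict, not_and, not_iff] at huc ⊢
    refine ⟨hne, ?_⟩
    have h2 := huc hne
    simp only [flipSet, hvF, huF, if_true, if_false]
    cases hb : π v <;> cases hb2 : π u <;> simp_all
  have hcard : Fintype.card V - (F.card + cNum G π v) ≤ cNum G (flipSet π F) v := by
    calc Fintype.card V - (F.card + cNum G π v)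
        ≤ Fintype.card V - (F ∪ conflictSet G π v).card := by
          have := Finset.card_union_le F (conflictSet G π v)
          have hc : cNum G π v = (conflictSet G π v).card := rfl
          omega
      _ = (univ \ (F ∪ conflictSet G π v)).card := by
          rw [Finset.card_sdiff_of_subset (subset_univ _), Finset.card_univ]
      _ ≤ _ := Finset.card_le_card hsub
  have hFn : F.card ≤ Fintype.card V := Finset.card_le_card (subset_univ F) |>.trans_eq Finset.card_univ
  omega
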